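/- The T-product of two tensors X ∈ ℝ^{I1×I2×I3} and Y ∈ ℝ^{I2×I4×I3} can be computed slice-wise in the Fourier domain: if Ĉ(:,:,i) = X̂(:,:,i)·Ŷ(:,:,i) for all i, where ·̂ denotes the mode-3 DFT, then C = ifft(Ĉ,[],3) equals the T-product X*Y defined via the block-circulant matrix construction. -/
import Mathlib


open scoped BigOperators

namespace TProd

/-- A third-order tensor given by its frontal slices, indexed cyclically by `ZMod n`. -/
abbrev Tensor (a b n : ℕ) := ZMod n → Matrix (Fin a) (Fin b) ℝ

/-- The T-product of two third-order tensors (block-circulant construction: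
`(X*Y)(k) = ∑ j, X(k−j) ⬝ Y(j)`). -/
noncomputable def tprod {a b c n : ℕ} [NeZero n] (X : Tensor a b n) (Y : Tensor b c n) :
    Tensor a c n :=
  fun k => ∑ j : ZMod n, X (k - j) * Y j

/-- The tensor transpose: transpose each frontal slice and reverse the order of
slices 2 through n. -/
def ttrans {a b n : ℕ} (X : Tensor a b n) : Tensor b a n := fun k => (X (-k)).transpose

/-- The identity tensor: first frontal slice the identity matrix, all others zero. -/
def tid (a n : ℕ) : Tensor a a n := fun k => if k = 0 then 1 else 0

/-- Squared Frobenius norm of a tensor. -/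
def frobSq {a b n : ℕ} [NeZero n] (X : Tensor a b n) : ℝ :=
  ∑ k : ZMod n, ∑ i, ∑ j, (X k i j) ^ 2

/-- Frobenius norm of a tensor. -/
noncomputable def frobNorm {a b n : ℕ} [NeZero n] (X : Tensor a b n) : ℝ :=
  Real.sqrt (frobSq X)

/-- Mode-3 discrete Fourier transform: the i-th Fourier-domain frontal slice. -/
noncomputable def dft {a b n : ℕ} [NeZero n] (X : Tensor a b n) : ZMod n → Matrix (Fin a) (Fin b) ℂ :=
  fun i => ∑ k : ZMod n,
    Complex.exp (-2 * Real.pi * Complex.I * ((i.val : ℂ) * (k.val : ℂ)) / (n : ℂ)) •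
      (X k).map (fun x => (x : ℂ))

/-- A tensor is f-diagonal if all its frontal slices are diagonal matrices. -/
def fDiag {a b n : ℕ} (S : Tensor a b n) : Prop :=
  ∀ k : ZMod n, ∀ i : Fin a, ∀ j : Fin b, (i : ℕ) ≠ (j : ℕ) → S k i j = 0

/-- Orthogonality under the T-product. -/
def Orthogonal {a n : ℕ} [NeZero n] (U : Tensor a a n) : Prop :=
  tprod (ttrans U) U = tid a n ∧ tprod U (ttrans U) = tid a n

/-- The four tensor Penrose equations: `A` is a Moore–Penrose pseudoinverse of `X`. -/
def IsMP {a b n : ℕ} [NeZero n] (X : Tensor a b n) (A : Tensor b a n) : Prop :=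
  tprod (tprod A X) A = A ∧
  tprod (tprod X A) X = X ∧
  ttrans (tprod X A) = tprod X A ∧
  ttrans (tprod A X) = tprod A X

/-- The block-circulant matrix of a tensor. -/
def circ {a b n : ℕ} (X : Tensor a b n) :
    Matrix (ZMod n × Fin a) (ZMod n × Fin b) ℝ :=
  Matrix.of fun p q => X (p.1 - q.1) p.2 q.2

end TProd

open TProd

open ZMod in
lemma tprod_char_eq {n : ℕ} [NeZero n] (i k : ZMod n) :
    Complex.exp (-2 * Real.pi * Complex.I * ((i.val : ℂ) * (k.val : ℂ)) / (n : ℂ)) =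
      ZMod.stdAddChar (-(i * k)) := by
  have h : (-(i * k) : ZMod n) = ((-(i.val * k.val : ℤ) : ℤ) : ZMod n) := by
    push_cast
    simp [ZMod.natCast_val, ZMod.cast_id]
  rw [h, ZMod.stdAddChar_coe]
  push_cast
  try ring_nf

lemma sum_swap13 {α β γ M : Type*} [Fintype α] [Fintype β] [Fintype γ] [AddCommMonoid M]
    (f : α → β → γ → M) :
    ∑ a, ∑ b, ∑ c, f a b c = ∑ c, ∑ b, ∑ a, f a b c :=
  Finset.sum_comm.trans <|
    (Finset.sum_congr rfl fun _ _ => Finset.sum_comm).trans Finset.sum_comm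

open ZMod in
lemma tprod_dft_entry {a b n : ℕ} [NeZero n] (X : Tensor a b n) (i : ZMod n)
    (p : Fin a) (q : Fin b) :
    TProd.dft X i p q = ZMod.dft (fun k => ((X k p q : ℝ) : ℂ)) i := by
  rw [TProd.dft, ZMod.dft_apply]
  rw [Matrix.sum_apply]
  refine Finset.sum_congr rfl fun k _ => ?_
  rw [Matrix.smul_apply, Matrix.map_apply, tprod_char_eq, mul_comm i k]
  try rfl

open ZMod in
lemma tprod_dft_injective {a b n : ℕ} [NeZero n] (C D : Tensor a b n)
    (h : ∀ i : ZMod n, TProd.dft C i = TProd.dft D i) : C = D := by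
  funext k
  ext p q
  have key : (fun k => ((C k p q : ℝ) : ℂ)) = (fun k => ((D k p q : ℝ) : ℂ)) := by
    apply (ZMod.dft (N := n) (E := ℂ)).injective
    funext i
    have := congrArg (fun M => M p q) (h i)
    simpa [tprod_dft_entry] using this
  have := congrFun key k
  exact_mod_cast this

open ZMod in
lemma tprod_dft_conv {a b c n : ℕ} [NeZero n] (X : Tensor a b n) (Y : Tensor b c n)
    (i : ZMod n) :
    TProd.dft (tprod X Y) i = TProd.dft X i * TProd.dft Y i := by
  ext p q
  rw [tprod_dft_entry, Matrix.mul_apply]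
  simp only [tprod_dft_entry]
  simp only [ZMod.dft_apply, smul_eq_mul]
  calc ∑ k : ZMod n, ZMod.stdAddChar (-(k * i)) * ((tprod X Y k p q : ℝ) : ℂ)
      = ∑ k : ZMod n, ∑ j : ZMod n, ∑ m : Fin b,
          ZMod.stdAddChar (-(k * i)) * (X (k - j) p m : ℂ) * (Y j m q : ℂ) := by
        refine Finset.sum_congr rfl fun k _ => ?_
        simp only [TProd.tprod, Finset.sum_apply, Matrix.sum_apply, Matrix.mul_apply]
        push_cast
        rw [Finset.mul_sum]
        refine Finset.sum_congr rfl fun j _ => ?_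
        rw [Finset.mul_sum]
        refine Finset.sum_congr rfl fun m _ => ?_
        ring
    _ = ∑ j : ZMod n, ∑ u : ZMod n, ∑ m : Fin b,
          (ZMod.stdAddChar (-(u * i)) * (X u p m : ℂ)) *
            (ZMod.stdAddChar (-(j * i)) * (Y j m q : ℂ)) := by
        rw [Finset.sum_comm]
        refine Finset.sum_congr rfl fun j _ => ?_
        refine Fintype.sum_equiv (Equiv.subRight j) _ _ fun k => ?_
        refine Finset.sum_congr rfl fun m _ => ?_
        simp only [Equiv.subRight_apply]
        have : ZMod.stdAddChar (-(k * i)) =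
            ZMod.stdAddChar (-((k - j) * i)) * ZMod.stdAddChar (-(j * i)) := by
          rw [← AddChar.map_add_eq_mul]
          ring_nf
        rw [this]
        ring
    _ = ∑ m : Fin b, (∑ u : ZMod n, ZMod.stdAddChar (-(u * i)) * (X u p m : ℂ)) *
          (∑ j : ZMod n, ZMod.stdAddChar (-(j * i)) * (Y j m q : ℂ)) := by
        rw [sum_swap13]
        refine Finset.sum_congr rfl fun m _ => ?_
        rw [Finset.sum_mul_sum]


/-- slicewise products in the Fourier domain compute the T-product. -/
theorem tprod_eq_of_dft_mul (I1 I2 I4 I3 : ℕ) [NeZero I3]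
    (X : Tensor I1 I2 I3) (Y : Tensor I2 I4 I3) (C : Tensor I1 I4 I3)
    (hC : ∀ i : ZMod I3, dft C i = dft X i * dft Y i) :
    C = tprod X Y := by
  refine (tprod_dft_injective C (tprod X Y) fun i => ?_)
  rw [hC i, tprod_dft_conv]
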